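/- Let ξ0 ∈ ℝ with 0 < r_min < |ξ0| < r_max, and let Λ(t) = e^{2t}(ξ0² + (1 − ξ0²)e^{−2t})^{3/2}. Then for every integer i ≥ 1 there exists a constant C(i) > 0 (depending only on i, r_min, r_max) such that for all t ≥ 0: |Λ(t)^{−i} ∫₀ᵗ Λ(s)^i ds − 1/(2i)| ≤ C(i) e^{−t}. -/

import Mathlib

set_option maxHeartbeats 2000000 in
/-- exponential rate of convergence of the weighted averages. -/
theorem stmt5 (ξ0 r_min r_max : ℝ) (h0 : 0 < r_min) (h1 : r_min < |ξ0|)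
    (h2 : |ξ0| < r_max)
    (Λ : ℝ → ℝ)
    (hΛ : ∀ t : ℝ, Λ t =
      Real.exp (2 * t) * (ξ0 ^ 2 + (1 - ξ0 ^ 2) * Real.exp (-2 * t)) ^ ((3:ℝ)/2)) :
    ∀ i : ℕ, 1 ≤ i → ∃ C : ℝ, 0 < C ∧ ∀ t : ℝ, 0 ≤ t →
      |(Λ t ^ i)⁻¹ * (∫ s in (0:ℝ)..t, Λ s ^ i) - 1 / (2 * i)| ≤ C * Real.exp (-t) := by
  intro i hi
  have hi1 : (1:ℝ) ≤ (i:ℝ) := by exact_mod_cast hi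
  set g : ℝ → ℝ := fun s => ξ0 ^ 2 + (1 - ξ0 ^ 2) * Real.exp (-2 * s) with hgdef
  set e : ℝ := 3 * (i:ℝ) / 2 with hedef
  have he1 : (1:ℝ) ≤ e := by rw [hedef]; linarith
  set m : ℝ := min (r_min ^ 2) 1 with hm
  set B : ℝ := max (r_max ^ 2) 1 with hB
  have hm0 : 0 < m := lt_min (by positivity) one_pos
  have hB1 : (1:ℝ) ≤ B := le_max_right _ _
  have hB0 : 0 < B := lt_of_lt_of_le one_pos hB1
  have hrB : r_max ^ 2 ≤ B := le_max_left _ _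
  have habs : |ξ0| ^ 2 = ξ0 ^ 2 := sq_abs ξ0
  have hx2 : r_min ^ 2 < ξ0 ^ 2 := by nlinarith [abs_nonneg ξ0]
  have hx2' : ξ0 ^ 2 < r_max ^ 2 := by nlinarith [abs_nonneg ξ0, h0.le.trans h1.le]
  -- bounds on g for s ≥ 0
  have hgb : ∀ s : ℝ, 0 ≤ s → m ≤ g s ∧ g s ≤ B := by
    intro s hs
    have hu0 : 0 < Real.exp (-2 * s) := Real.exp_pos _
    have hu1 : Real.exp (-2 * s) ≤ 1 := by
      rw [Real.exp_le_one_iff]; nlinarith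
    have hg1 : g s = ξ0 ^ 2 + (1 - ξ0 ^ 2) * Real.exp (-2 * s) := rfl
    constructor
    · rcases le_total (ξ0 ^ 2) 1 with h | h
      · have : m ≤ ξ0 ^ 2 := le_trans (min_le_left _ _) hx2.le
        nlinarith
      · have : m ≤ 1 := min_le_right _ _
        nlinarith
    · rcases le_total (ξ0 ^ 2) 1 with h | h
      · nlinarith
      · nlinarith
  have hgpos : ∀ s : ℝ, 0 ≤ s → 0 < g s := fun s hs => lt_of_lt_of_le hm0 (hgb s hs).1
  -- derivative of g
  set gd : ℝ → ℝ := fun s => (1 - ξ0 ^ 2) * (Real.exp (-2 * s) * (-2)) with hgddef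
  have hgderiv : ∀ s : ℝ, HasDerivAt g (gd s) s := by
    intro s
    have hlin : HasDerivAt (fun s : ℝ => -2 * s) (-2) s := by
      simpa using (hasDerivAt_id s).const_mul (-2 : ℝ)
    have hexp : HasDerivAt (fun s : ℝ => Real.exp (-2 * s)) (Real.exp (-2 * s) * (-2)) s :=
      hlin.exp
    simpa [hgdef, hgddef] using (hexp.const_mul (1 - ξ0 ^ 2)).const_add (ξ0 ^ 2)
  -- Λ^i formula
  have hΛpow : ∀ s : ℝ, 0 ≤ s → Λ s ^ i = Real.exp (2 * (i:ℝ) * s) * g s ^ e := by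
    intro s hs
    have hgs : (0:ℝ) ≤ g s := (hgpos s hs).le
    rw [hΛ s]
    rw [show ξ0 ^ 2 + (1 - ξ0 ^ 2) * Real.exp (-2 * s) = g s from rfl]
    rw [mul_pow, ← Real.exp_nat_mul, ← Real.rpow_natCast (g s ^ ((3:ℝ)/2)) i,
      ← Real.rpow_mul hgs]
    rw [show (i:ℝ) * (2 * s) = 2 * (i:ℝ) * s by ring,
      show (3:ℝ) / 2 * (i:ℝ) = e by rw [hedef]; ring]
  -- antiderivative and correction term
  have hi0 : (0:ℝ) < 2 * (i:ℝ) := by linarith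
  have h2i : (2 * (i:ℝ)) ≠ 0 := hi0.ne'
  set φ : ℝ → ℝ :=
    fun s => Real.exp (2 * (i:ℝ) * s) * (gd s * e * g s ^ (e - 1)) * (2 * (i:ℝ))⁻¹ with hφdef
  set G : ℝ → ℝ := fun s => Real.exp (2 * (i:ℝ) * s) * g s ^ e * (2 * (i:ℝ))⁻¹ with hGdef
  have hGderiv : ∀ s : ℝ, 0 ≤ s → HasDerivAt G (Λ s ^ i + φ s) s := by
    intro s hs
    have hne : g s ≠ 0 := (hgpos s hs).ne'
    have hlin : HasDerivAt (fun s : ℝ => 2 * (i:ℝ) * s) (2 * (i:ℝ)) s := by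
      simpa using (hasDerivAt_id s).const_mul (2 * (i:ℝ))
    have hexp : HasDerivAt (fun s : ℝ => Real.exp (2 * (i:ℝ) * s))
        (Real.exp (2 * (i:ℝ) * s) * (2 * (i:ℝ))) s := hlin.exp
    have hrpow : HasDerivAt (fun s : ℝ => g s ^ e) (gd s * e * g s ^ (e - 1)) s :=
      (hgderiv s).rpow_const (Or.inl hne)
    have hprod := (hexp.mul hrpow).mul_const ((2 * (i:ℝ))⁻¹)
    have heq : (Real.exp (2 * (i:ℝ) * s) * (2 * (i:ℝ)) * g s ^ e +
        Real.exp (2 * (i:ℝ) * s) * (gd s * e * g s ^ (e - 1))) * (2 * (i:ℝ))⁻¹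
        = Λ s ^ i + φ s := by
      rw [hΛpow s hs]
      simp only [hφdef]
      field_simp
    rw [heq] at hprod
    exact hprod
  -- constants
  set K : ℝ := 3 / 2 * B * B ^ (e - 1) with hK
  have hK0 : 0 < K := by positivity
  set C : ℝ := (m ^ e)⁻¹ * (1 / (2 * (i:ℝ)) + K) with hC
  have hC0 : 0 < C := by positivity
  refine ⟨C, hC0, ?_⟩
  intro t ht
  have huIcc : Set.uIcc (0:ℝ) t = Set.Icc 0 t := Set.uIcc_of_le ht
  -- continuity facts on [0, t]
  have hgcont : Continuous g := by
    rw [hgdef]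
    exact continuous_const.add (continuous_const.mul
      (Real.continuous_exp.comp (continuous_const.mul continuous_id)))
  have hrpowcont : ∀ p : ℝ, ContinuousOn (fun s => g s ^ p) (Set.Icc (0:ℝ) t) := by
    intro p
    exact ContinuousOn.rpow_const hgcont.continuousOn
      (fun s hs => Or.inl (hgpos s hs.1).ne')
  have hexpcont : Continuous (fun s : ℝ => Real.exp (2 * (i:ℝ) * s)) :=
    Real.continuous_exp.comp (continuous_const.mul continuous_id)
  have hgdcont : Continuous gd := by
    rw [hgddef]
    exact continuous_const.mul ((Real.continuous_exp.comp
      (continuous_const.mul continuous_id)).mul continuous_const)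
  have hΛicont : ContinuousOn (fun s => Λ s ^ i) (Set.Icc (0:ℝ) t) := by
    apply ContinuousOn.congr (hexpcont.continuousOn.mul (hrpowcont e))
    intro s hs
    exact hΛpow s hs.1
  have hφcont : ContinuousOn φ (Set.Icc (0:ℝ) t) := by
    simp only [hφdef]
    apply ContinuousOn.mul _ continuousOn_const
    apply hexpcont.continuousOn.mul
    exact (hgdcont.continuousOn.mul continuousOn_const).mul (hrpowcont (e - 1))
  have hΛint : IntervalIntegrable (fun s => Λ s ^ i) MeasureTheory.volume 0 t := by
    apply ContinuousOn.intervalIntegrable; rwa [huIcc]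
  have hφint : IntervalIntegrable φ MeasureTheory.volume 0 t := by
    apply ContinuousOn.intervalIntegrable; rwa [huIcc]
  -- FTC
  set R : ℝ := ∫ s in (0:ℝ)..t, φ s with hRdef
  have hFTC : ∫ s in (0:ℝ)..t, (Λ s ^ i + φ s) = G t - G 0 := by
    apply intervalIntegral.integral_eq_sub_of_hasDerivAt
    · intro s hs
      rw [huIcc] at hs
      exact hGderiv s hs.1
    · exact hΛint.add hφint
  have hsplit : ∫ s in (0:ℝ)..t, Λ s ^ i = G t - G 0 - R := by
    have hadd := intervalIntegral.integral_add hΛint hφint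
    rw [hadd] at hFTC
    rw [hRdef]
    linarith
  -- bound on the correction integral
  have hφbound : |R| ≤ K * Real.exp ((2 * (i:ℝ) - 1) * t) := by
    have hb : ∀ s ∈ Set.uIoc (0:ℝ) t, ‖φ s‖ ≤ K * Real.exp ((2 * (i:ℝ) - 2) * t) := by
      intro s hs
      rw [Set.uIoc_of_le ht] at hs
      have hs0 : 0 ≤ s := hs.1.le
      have hst : s ≤ t := hs.2
      have hgs := hgb s hs0
      have hgsp := hgpos s hs0
      have hgse : g s ^ (e - 1) ≤ B ^ (e - 1) :=
        Real.rpow_le_rpow hgsp.le hgs.2 (by linarith)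
      have hgse0 : (0:ℝ) ≤ g s ^ (e - 1) := Real.rpow_nonneg hgsp.le _
      have habs2 : |1 - ξ0 ^ 2| ≤ B := by
        rw [abs_le]; constructor <;> nlinarith
      have hgdabs : |gd s| = |1 - ξ0 ^ 2| * (Real.exp (-2 * s) * 2) := by
        simp only [hgddef, abs_mul]
        rw [abs_of_pos (Real.exp_pos _)]
        norm_num
      have h1 : ‖φ s‖ = Real.exp (2 * (i:ℝ) * s) *
          (|gd s| * e * g s ^ (e - 1)) * (2 * (i:ℝ))⁻¹ := by
        simp only [hφdef, Real.norm_eq_abs, abs_mul]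
        rw [abs_of_pos (Real.exp_pos _), abs_of_nonneg (by linarith : (0:ℝ) ≤ e),
          abs_of_nonneg hgse0, abs_of_pos (inv_pos.mpr hi0)]
      rw [h1, hgdabs]
      have hcoef : e * (2 * (i:ℝ))⁻¹ = 3 / 4 := by
        rw [hedef]; field_simp; ring
      calc Real.exp (2 * (i:ℝ) * s) *
            (|1 - ξ0 ^ 2| * (Real.exp (-2 * s) * 2) * e * g s ^ (e - 1)) * (2 * (i:ℝ))⁻¹
          ≤ Real.exp (2 * (i:ℝ) * s) *
            (B * (Real.exp (-2 * s) * 2) * e * B ^ (e - 1)) * (2 * (i:ℝ))⁻¹ := by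
            gcongr ?_ * (?_ * ?_ * ?_ * ?_) * ?_ <;>
              first
                | rfl
                | exact habs2
                | exact hgse
                | positivity
        _ = (3 / 2 * B * B ^ (e - 1)) *
            (Real.exp (2 * (i:ℝ) * s) * Real.exp (-2 * s)) := by
            have : Real.exp (2 * (i:ℝ) * s) *
                (B * (Real.exp (-2 * s) * 2) * e * B ^ (e - 1)) * (2 * (i:ℝ))⁻¹
                = (2 * B * B ^ (e - 1)) *
                  (Real.exp (2 * (i:ℝ) * s) * Real.exp (-2 * s)) * (e * (2 * (i:ℝ))⁻¹) := by
              ring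
            rw [this, hcoef]; ring
        _ = K * Real.exp ((2 * (i:ℝ) - 2) * s) := by
            rw [hK, ← Real.exp_add]
            congr 1
            ring
        _ ≤ K * Real.exp ((2 * (i:ℝ) - 2) * t) := by
            have hex : (2 * (i:ℝ) - 2) * s ≤ (2 * (i:ℝ) - 2) * t := by nlinarith
            gcongr
    have hnorm := intervalIntegral.norm_integral_le_of_norm_le_const hb
    rw [Real.norm_eq_abs] at hnorm
    have h2 : |t - 0| = t := by rw [sub_zero, abs_of_nonneg ht]
    rw [h2] at hnorm
    calc |R| ≤ K * Real.exp ((2 * (i:ℝ) - 2) * t) * t := hnorm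
      _ ≤ K * Real.exp ((2 * (i:ℝ) - 2) * t) * Real.exp t := by
          gcongr
          linarith [Real.add_one_le_exp t]
      _ = K * Real.exp ((2 * (i:ℝ) - 1) * t) := by
          rw [mul_assoc, ← Real.exp_add]
          congr 2
          ring
  -- lower bound on Λ t ^ i and values of G
  have hgt := hgb t ht
  have hΛt : Λ t ^ i = Real.exp (2 * (i:ℝ) * t) * g t ^ e := hΛpow t ht
  have hgtpos := hgpos t ht
  have hΛtpos : 0 < Λ t ^ i := by
    rw [hΛt]; positivity
  have hΛtlow : Real.exp (2 * (i:ℝ) * t) * m ^ e ≤ Λ t ^ i := by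
    rw [hΛt]
    have hrp : m ^ e ≤ g t ^ e := Real.rpow_le_rpow hm0.le hgt.1 (by linarith)
    have hep : (0:ℝ) < Real.exp (2 * (i:ℝ) * t) := Real.exp_pos _
    nlinarith [Real.rpow_nonneg hm0.le e]
  have hg0 : g 0 = 1 := by
    show ξ0 ^ 2 + (1 - ξ0 ^ 2) * Real.exp (-2 * 0) = 1
    norm_num
  have hG0 : G 0 = (2 * (i:ℝ))⁻¹ := by
    simp only [hGdef, hg0, mul_zero, Real.exp_zero, Real.one_rpow, one_mul]
  have hGt : G t = Λ t ^ i * (2 * (i:ℝ))⁻¹ := by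
    simp only [hGdef]
    rw [hΛt]
  -- assemble
  have hne1 : Λ t ^ i ≠ 0 := hΛtpos.ne'
  rw [hsplit, hGt, hG0]
  have hrw : (Λ t ^ i)⁻¹ * (Λ t ^ i * (2 * (i:ℝ))⁻¹ - (2 * (i:ℝ))⁻¹ - R) - 1 / (2 * (i:ℝ))
      = -((Λ t ^ i)⁻¹ * ((2 * (i:ℝ))⁻¹ + R)) := by
    field_simp
    ring
  rw [hrw, abs_neg, abs_mul, abs_of_pos (inv_pos.mpr hΛtpos)]
  have habsR : |(2 * (i:ℝ))⁻¹ + R| ≤ (2 * (i:ℝ))⁻¹ + K * Real.exp ((2 * (i:ℝ) - 1) * t) := by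
    calc |(2 * (i:ℝ))⁻¹ + R| ≤ |(2 * (i:ℝ))⁻¹| + |R| := abs_add_le _ _
      _ ≤ (2 * (i:ℝ))⁻¹ + K * Real.exp ((2 * (i:ℝ) - 1) * t) := by
          rw [abs_of_pos (inv_pos.mpr hi0)]
          exact add_le_add_right hφbound _
  have hinv : (Λ t ^ i)⁻¹ ≤ (m ^ e)⁻¹ * Real.exp (-(2 * (i:ℝ) * t)) := by
    rw [Real.exp_neg, ← mul_inv]
    apply inv_anti₀ (by positivity)
    rw [mul_comm]
    exact hΛtlow
  have emul : Real.exp (-(2 * (i:ℝ) * t)) * Real.exp ((2 * (i:ℝ) - 1) * t)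
      = Real.exp (-t) := by
    rw [← Real.exp_add]; congr 1; ring
  have e1 : Real.exp (-(2 * (i:ℝ) * t)) ≤ Real.exp (-t) := by
    rw [Real.exp_le_exp]; nlinarith
  calc (Λ t ^ i)⁻¹ * |(2 * (i:ℝ))⁻¹ + R|
      ≤ ((m ^ e)⁻¹ * Real.exp (-(2 * (i:ℝ) * t))) *
        ((2 * (i:ℝ))⁻¹ + K * Real.exp ((2 * (i:ℝ) - 1) * t)) := by
        apply mul_le_mul hinv habsR (abs_nonneg _) (by positivity)
    _ = (m ^ e)⁻¹ * (Real.exp (-(2 * (i:ℝ) * t)) * (2 * (i:ℝ))⁻¹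
          + K * (Real.exp (-(2 * (i:ℝ) * t)) * Real.exp ((2 * (i:ℝ) - 1) * t))) := by
        ring
    _ = (m ^ e)⁻¹ * (Real.exp (-(2 * (i:ℝ) * t)) * (2 * (i:ℝ))⁻¹ + K * Real.exp (-t)) := by
        rw [emul]
    _ ≤ (m ^ e)⁻¹ * (Real.exp (-t) * (2 * (i:ℝ))⁻¹ + K * Real.exp (-t)) := by
        gcongr
    _ = C * Real.exp (-t) := by
        rw [hC]; ring
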